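/- Let c ≥ 1 be an integer and let h : ℝ → ℝ be representable on (-1,1) by a power series h(θ) = ∑_{m=0}^∞ b_m θ^m with radius of convergence at least 1. Define f(θ) = h(θ)/(1-θ)^c and ĥ(w) = ((c-1)!/(w+c-1)!) · f^{(w)}(0), where f^{(w)}(0) is the w-th derivative of f at 0. Then for every θ ∈ (0,1), the family w ↦ ĥ(w) · C(w+c-1, w) · (1-θ)^c · θ^w is summable over w ∈ ℕ and its sum equals h(θ). -/

import Mathlib

open Nat Finset

/-- Sufficiency direction of Degroot's theorem: if h is given by a
power series converging on (-1,1), then ĥ(w) = ((c-1)!/(w+c-1)!)·f⁽ʷ⁾(0), with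
f(θ) = h(θ)/(1-θ)^c, is an unbiased estimator of h(θ) under negative binomial
sampling. -/
theorem stmt_5 (c : ℕ) (hc : 1 ≤ c) (h : ℝ → ℝ) (b : ℕ → ℝ)
    (hb : ∀ θ : ℝ, θ ∈ Set.Ioo (-1 : ℝ) 1 → HasSum (fun m : ℕ => b m * θ ^ m) (h θ)) :
    ∀ θ : ℝ, θ ∈ Set.Ioo (0 : ℝ) 1 →
      HasSum (fun w : ℕ =>
        (((c - 1).factorial : ℝ) / ((w + c - 1).factorial : ℝ) *
            iteratedDeriv w (fun t : ℝ => h t / (1 - t) ^ c) 0) *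
          ((w + c - 1).choose w : ℝ) * (1 - θ) ^ c * θ ^ w)
        (h θ) := by
  intro θ hθ
  obtain ⟨hθ0, hθ1⟩ := hθ
  set d := c - 1 with hd
  have hcd : d + 1 = c := Nat.succ_pred_eq_of_pos hc
  set f : ℝ → ℝ := fun t : ℝ => h t / (1 - t) ^ c with hf
  -- absolute summability of the power-series terms of h on (-1,1)
  have habs : ∀ t : ℝ, |t| < 1 → Summable (fun m => ‖b m * t ^ m‖) := by
    intro t ht
    set ρ : ℝ := (|t| + 1) / 2 with hρ
    have h0t : (0:ℝ) ≤ |t| := abs_nonneg t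
    have hρ1 : ρ < 1 := by rw [hρ]; linarith
    have hρ2 : |t| < ρ := by rw [hρ]; linarith
    have hρpos : 0 < ρ := by rw [hρ]; linarith
    have hsum : Summable (fun m => b m * ρ ^ m) :=
      (hb ρ ⟨by linarith, hρ1⟩).summable
    have htend : Filter.Tendsto (fun m => |b m * ρ ^ m|) Filter.atTop (nhds 0) := by
      simpa using hsum.tendsto_atTop_zero.abs
    obtain ⟨C, hC⟩ := htend.bddAbove_range
    have hCle : ∀ m, |b m * ρ ^ m| ≤ C := fun m => hC (Set.mem_range_self m)
    have hgeo : Summable (fun m : ℕ => C * (|t| / ρ) ^ m) :=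
      (summable_geometric_of_lt_one (by positivity)
        ((div_lt_one hρpos).mpr hρ2)).mul_left C
    refine Summable.of_nonneg_of_le (fun m => norm_nonneg _) (fun m => ?_) hgeo
    have hpow : ρ * (|t| / ρ) = |t| := by field_simp
    have hrw : ‖b m * t ^ m‖ = |b m * ρ ^ m| * (|t| / ρ) ^ m := by
      rw [norm_mul, norm_pow, Real.norm_eq_abs, Real.norm_eq_abs, abs_mul, abs_pow,
        abs_of_pos hρpos, mul_assoc, ← mul_pow, hpow]
    rw [hrw]
    exact mul_le_mul_of_nonneg_right (hCle m) (by positivity)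
  -- the negative-binomial series
  have hgsum : ∀ t : ℝ, |t| < 1 →
      HasSum (fun n : ℕ => ((n + d).choose d : ℝ) * t ^ n) (1 / (1 - t) ^ (d + 1)) := by
    intro t ht
    exact hasSum_choose_mul_geometric_of_norm_lt_one d (by rwa [Real.norm_eq_abs])
  have hgabs : ∀ t : ℝ, |t| < 1 →
      Summable (fun n : ℕ => ‖((n + d).choose d : ℝ) * t ^ n‖) := by
    intro t ht
    have := (hgsum |t| (by rwa [abs_abs])).summable
    refine this.congr fun n => ?_
    simp [norm_mul, norm_pow, Real.norm_eq_abs, Nat.abs_cast]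
  -- Cauchy-product coefficients
  set a : ℕ → ℝ := fun n => ∑ k ∈ range (n + 1), b k * (((n - k) + d).choose d : ℝ) with ha
  have hA : ∀ t : ℝ, |t| < 1 → HasSum (fun n => a n * t ^ n) (h t * (1 / (1 - t) ^ (d + 1))) := by
    intro t ht
    have hmul := hasSum_sum_range_mul_of_summable_norm (habs t ht) (hgabs t ht)
    rw [(hb t ⟨neg_lt_of_abs_lt ht, lt_of_abs_lt ht⟩).tsum_eq, (hgsum t ht).tsum_eq] at hmul
    refine hmul.congr_fun fun n => ?_
    rw [ha]
    rw [sum_mul]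
    refine Finset.sum_congr rfl fun k hk => ?_
    rw [mem_range] at hk
    have hkn : k ≤ n := Nat.lt_succ_iff.mp hk
    have : t ^ k * t ^ (n - k) = t ^ n := by
      rw [← pow_add, Nat.add_sub_cancel' hkn]
    linear_combination (-(b k * (((n - k) + d).choose d : ℝ))) * this
  -- inner-sum rewriting used twice
  have hinner : ∀ t : ℝ, (fun n : ℕ => ∑ k ∈ range (n + 1),
      (b k * t ^ k) * (((n - k) + d).choose d : ℝ) * t ^ (n - k)) = fun n => a n * t ^ n := by
    intro t
    funext n
    rw [ha, sum_mul]
    refine Finset.sum_congr rfl fun k hk => ?_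
    rw [mem_range] at hk
    have hkn : k ≤ n := Nat.lt_succ_iff.mp hk
    have : t ^ k * t ^ (n - k) = t ^ n := by
      rw [← pow_add, Nat.add_sub_cancel' hkn]
    linear_combination (b k * (((n - k) + d).choose d : ℝ)) * this
  -- the formal power series of f
  set q := FormalMultilinearSeries.ofScalars ℝ a with hq
  set rθ : NNReal := ⟨θ, hθ0.le⟩ with hrθ
  have hθabs : |θ| < 1 := by rw [abs_of_pos hθ0]; exact hθ1
  have hradius : (rθ : ENNReal) ≤ q.radius := by
    apply FormalMultilinearSeries.le_radius_of_summable_norm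
    have hsum := summable_norm_sum_mul_range_of_summable_norm (habs θ hθabs) (hgabs θ hθabs)
    refine hsum.congr fun n => ?_
    have : ∑ k ∈ range (n + 1), (b k * θ ^ k) * (((n - k) + d).choose d * θ ^ (n - k))
        = a n * θ ^ n := by
      have := congrFun (hinner θ) n
      simpa [mul_assoc] using this
    rw [this, norm_mul, norm_pow, Real.norm_eq_abs θ, abs_of_pos hθ0,
      FormalMultilinearSeries.ofScalars_norm]
    rfl
  have hball : HasFPowerSeriesOnBall f q 0 rθ := by
    refine ⟨hradius, ENNReal.coe_pos.mpr (NNReal.coe_pos.mp hθ0), fun {y} hy => ?_⟩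
    rw [EMetric.mem_ball, edist_zero_right] at hy
    have hy1 : |y| < 1 := by
      have : ‖y‖ < (rθ : ℝ) := by exact_mod_cast hy
      rw [Real.norm_eq_abs] at this
      exact this.trans hθ1
    have := hA y hy1
    have hfy : f (0 + y) = h y * (1 / (1 - y) ^ (d + 1)) := by
      rw [hf, zero_add, hcd]
      ring
    rw [← hfy] at this
    refine this.congr_fun fun n => ?_
    rw [hq, FormalMultilinearSeries.ofScalars_apply_eq]
    simp [smul_eq_mul]
  -- the derivatives of f
  have hder : ∀ n : ℕ, iteratedDeriv n f 0 = (n ! : ℝ) * a n := by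
    intro n
    have h1 := hball.factorial_smul (y := (1:ℝ)) n
    rw [← iteratedDeriv_eq_iteratedFDeriv] at h1
    rw [hq, FormalMultilinearSeries.ofScalars_apply_eq] at h1
    simp only [one_pow, smul_eq_mul, mul_one, nsmul_eq_mul] at h1
    rw [← h1]
  -- conclude
  have hfin := (hA θ hθabs).mul_right ((1 - θ) ^ c)
  have hsumval : h θ * (1 / (1 - θ) ^ (d + 1)) * (1 - θ) ^ c = h θ := by
    rw [hcd]
    have : (1 - θ) ^ c ≠ 0 := pow_ne_zero _ (by linarith)
    field_simp
  rw [hsumval] at hfin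
  refine hfin.congr_fun fun w => ?_
  rw [hder w]
  have hwc : w + c - 1 = w + d := by omega
  rw [hwc]
  have hkey : ((w + d).choose w : ℝ) * (w ! : ℝ) * (d ! : ℝ) = ((w + d)! : ℝ) := by
    exact_mod_cast congrArg (Nat.cast (R := ℝ))
      (by simpa using Nat.choose_mul_factorial_mul_factorial (Nat.le_add_right w d))
  have hne : ((w + d)! : ℝ) ≠ 0 := Nat.cast_ne_zero.mpr (Nat.factorial_ne_zero _)
  field_simp
  linear_combination (a w) * hkey
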